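/- Let ṽ : ℝ³ → ℝ² and θ : ℝ³ → ℝ be smooth and 1-periodic in the horizontal variables, and suppose ∫_{−h}^0 div_H ṽ(x_H,ζ) dζ = 0 for every x_H. Set w(ṽ)(x_H,x₃) = −∫_{−h}^{x₃} div_H ṽ(x_H,ζ) dζ and ũ = (ṽ, w(ṽ)) : ℝ³ → ℝ³. Then ∫_𝒪 [ ‖ṽ‖² θ (ũ·∇)θ + θ² ⟨ṽ, (ũ·∇)ṽ⟩ ] dx = 0, where ‖·‖ and ⟨·,·⟩ are the Euclidean norm and inner product on ℝ². -/

import Mathlib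

open MeasureTheory Real

noncomputable section

/-- Partial derivative of `f` in the `j`-th coordinate direction. -/
def pd (j : Fin 3) (f : (Fin 3 → ℝ) → ℝ) (x : Fin 3 → ℝ) : ℝ :=
  fderiv ℝ f x (Pi.single j 1)

/-- `f` is 1-periodic in the two horizontal variables. -/
def HorizPeriodic (f : (Fin 3 → ℝ) → ℝ) : Prop :=
  ∀ x : Fin 3 → ℝ, f (x + Pi.single 0 1) = f x ∧ f (x + Pi.single 1 1) = f x

/-- The fundamental domain `[0,1] × [0,1] × [-h,0]` of `𝒪 = 𝕋² × (-h,0)`. -/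
def Box (h : ℝ) : Set (Fin 3 → ℝ) := Set.Icc ![0, 0, -h] ![1, 1, 0]

/-- Horizontal divergence `div_H v = ∂₁ v¹ + ∂₂ v²`. -/
def divH (v : Fin 2 → (Fin 3 → ℝ) → ℝ) (x : Fin 3 → ℝ) : ℝ :=
  pd 0 (v 0) x + pd 1 (v 1) x

/-- Horizontal advection `(v · ∇_H) g = v¹ ∂₁ g + v² ∂₂ g`. -/
def advH (v : Fin 2 → (Fin 3 → ℝ) → ℝ) (g : (Fin 3 → ℝ) → ℝ) (x : Fin 3 → ℝ) : ℝ :=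
  v 0 x * pd 0 g x + v 1 x * pd 1 g x

/-- Advection `(u · ∇) g` by the full velocity field `u = (v, w)`. -/
def adv3 (v : Fin 2 → (Fin 3 → ℝ) → ℝ) (w g : (Fin 3 → ℝ) → ℝ) (x : Fin 3 → ℝ) : ℝ :=
  v 0 x * pd 0 g x + v 1 x * pd 1 g x + w x * pd 2 g x

/-- Vertical velocity `w(v)(x) = -∫_{-h}^{x₃} div_H v (x_H, ζ) dζ`. -/
def wv (h : ℝ) (v : Fin 2 → (Fin 3 → ℝ) → ℝ) (x : Fin 3 → ℝ) : ℝ :=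
  -(∫ ζ in (-h)..(x 2), divH v (Function.update x 2 ζ))

/-- Vertical primitive `Θ(x) = ∫_{-h}^{x₃} θ(x_H, ζ) dζ`. -/
def vint (h : ℝ) (θ : (Fin 3 → ℝ) → ℝ) (x : Fin 3 → ℝ) : ℝ :=
  ∫ ζ in (-h)..(x 2), θ (Function.update x 2 ζ)

/-! ### Auxiliary lemmas -/

lemma update_insertNth (j : Fin 3) (s t : ℝ) (y : Fin 2 → ℝ) :
    Function.update (Fin.insertNth (α := fun _ => ℝ) j s y) j t = Fin.insertNth j t y := by
  funext i
  rcases eq_or_ne i j with rfl | hij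
  · simp
  · obtain ⟨k, rfl⟩ := Fin.exists_succAbove_eq_iff.mpr hij
    simp [Function.update_of_ne hij, Fin.insertNth_apply_succAbove]

lemma insertNth_add_single (j : Fin 3) (t c : ℝ) (y : Fin 2 → ℝ) :
    Fin.insertNth (α := fun _ => ℝ) j t y + Pi.single j c
      = Fin.insertNth (α := fun _ => ℝ) j (t + c) y := by
  funext i
  rcases eq_or_ne i j with rfl | hij
  · simp
  · obtain ⟨k, rfl⟩ := Fin.exists_succAbove_eq_iff.mpr hij
    simp [Fin.insertNth_apply_succAbove, Pi.single_eq_of_ne hij]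

lemma continuous_insertNth (j : Fin 3) (y : Fin 2 → ℝ) :
    Continuous fun t : ℝ => Fin.insertNth (α := fun _ => ℝ) j t y := by
  refine continuous_pi fun i => ?_
  rcases eq_or_ne i j with rfl | hij
  · simpa using continuous_id'
  · obtain ⟨k, rfl⟩ := Fin.exists_succAbove_eq_iff.mpr hij
    simpa [Fin.insertNth_apply_succAbove] using continuous_const

lemma continuous_updateVal (x : Fin 3 → ℝ) (j : Fin 3) :
    Continuous fun t : ℝ => Function.update x j t := by
  refine continuous_pi fun i => ?_
  rcases eq_or_ne i j with rfl | hij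
  · simpa using continuous_id'
  · simpa [Function.update_of_ne hij] using continuous_const

lemma continuous_updatePair (j : Fin 3) :
    Continuous fun p : (Fin 3 → ℝ) × ℝ => Function.update p.1 j p.2 := by
  refine continuous_pi fun i => ?_
  rcases eq_or_ne i j with rfl | hij
  · simpa using continuous_snd
  · simpa [Function.update_of_ne hij, Function.comp_def] using (continuous_apply i).comp continuous_fst

lemma pd_hasDerivAt_update {g : (Fin 3 → ℝ) → ℝ} (hg : Differentiable ℝ g) (x : Fin 3 → ℝ)
    (j : Fin 3) (t : ℝ) :
    HasDerivAt (fun s => g (Function.update x j s)) (pd j g (Function.update x j t)) t := by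
  have h1 : (fun s : ℝ => Function.update x j s)
      = fun s => x + (s - x j) • (Pi.single j 1 : Fin 3 → ℝ) := by
    funext s i
    rcases eq_or_ne i j with rfl | hij
    · simp
    · simp [Function.update_of_ne hij, Pi.single_eq_of_ne hij]
  have h2 : HasDerivAt (fun s : ℝ => x + (s - x j) • (Pi.single j 1 : Fin 3 → ℝ))
      (Pi.single j 1) t := by
    simpa using
      (((hasDerivAt_id t).sub_const (x j)).smul_const (Pi.single j 1 : Fin 3 → ℝ)).const_add x
  have h2' : HasDerivAt (fun s : ℝ => Function.update x j s) (Pi.single j 1) t := h1 ▸ h2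
  exact (hg (Function.update x j t)).hasFDerivAt.comp_hasDerivAt t h2'

lemma pd_cont {g : (Fin 3 → ℝ) → ℝ} (hg : ContDiff ℝ (⊤ : ℕ∞) g) (j : Fin 3) :
    Continuous (pd j g) := by
  have h := hg.continuous_fderiv (by simp)
  exact h.clm_apply continuous_const

lemma pd_mul {f g : (Fin 3 → ℝ) → ℝ} {x : Fin 3 → ℝ} (j : Fin 3)
    (hf : DifferentiableAt ℝ f x) (hg : DifferentiableAt ℝ g x) :
    pd j (fun y => f y * g y) x = f x * pd j g x + pd j f x * g x := by
  unfold pd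
  rw [fderiv_fun_mul hf hg]
  simp [smul_eq_mul]
  ring

lemma pd_add {f g : (Fin 3 → ℝ) → ℝ} {x : Fin 3 → ℝ} (j : Fin 3)
    (hf : DifferentiableAt ℝ f x) (hg : DifferentiableAt ℝ g x) :
    pd j (fun y => f y + g y) x = pd j f x + pd j g x := by
  unfold pd
  rw [fderiv_fun_add hf hg]
  simp

lemma pd_sq {f : (Fin 3 → ℝ) → ℝ} {x : Fin 3 → ℝ} (j : Fin 3)
    (hf : DifferentiableAt ℝ f x) :
    pd j (fun y => f y ^ 2) x = 2 * f x * pd j f x := by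
  have h : (fun y => f y ^ 2) = fun y => f y * f y := by funext y; ring
  rw [h, pd_mul j hf hf]; ring

lemma slice_integral_zero {a b : Fin 3 → ℝ} (f : (Fin 3 → ℝ) → ℝ) (hf : Continuous f) (j : Fin 3)
    (h0 : ∀ y : Fin 2 → ℝ, (∫ t in Set.Icc (a j) (b j), f (j.insertNth t y)) = 0) :
    (∫ x in Set.Icc a b, f x) = 0 := by
  set e : ℝ × (Fin 2 → ℝ) ≃ᵐ (Fin 3 → ℝ) :=
    (MeasurableEquiv.piFinSuccAbove (fun _ => ℝ) j).symm with he
  have hem : MeasurePreserving e :=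
    (volume_preserving_piFinSuccAbove (fun _ : Fin 3 => ℝ) j).symm _
  have hIcc : e ⁻¹' Set.Icc a b
      = Set.Icc (a j) (b j) ×ˢ Set.Icc (a ∘ j.succAbove) (b ∘ j.succAbove) :=
    ((Fin.insertNthOrderIso (fun _ => ℝ) j).preimage_Icc a b).trans (Set.Icc_prod_eq _ _)
  have hecont : Continuous (fun p : ℝ × (Fin 2 → ℝ) => e p) := by
    have h1 : (fun p : ℝ × (Fin 2 → ℝ) => e p) = fun p => j.insertNth p.1 p.2 := by
      funext p; simp [he, Fin.insertNthEquiv]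
    rw [h1]
    exact continuous_pi fun i => by
      rcases eq_or_ne i j with rfl | hij
      · simpa using continuous_fst
      · obtain ⟨k, rfl⟩ := Fin.exists_succAbove_eq_iff.mpr hij
        simpa [Fin.insertNth_apply_succAbove, Function.comp_def] using (continuous_apply k).comp continuous_snd
  rw [← hem.map_eq, setIntegral_map_equiv, hIcc, Measure.volume_eq_prod]
  have hswap : MeasurePreserving (Prod.swap : (Fin 2 → ℝ) × ℝ → ℝ × (Fin 2 → ℝ))
      ((volume : Measure (Fin 2 → ℝ)).prod (volume : Measure ℝ))
      ((volume : Measure ℝ).prod (volume : Measure (Fin 2 → ℝ))) :=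
    Measure.measurePreserving_swap
  have hswapemb : MeasurableEmbedding (Prod.swap : (Fin 2 → ℝ) × ℝ → ℝ × (Fin 2 → ℝ)) :=
    MeasurableEquiv.prodComm.measurableEmbedding
  have hsi := hswap.setIntegral_preimage_emb hswapemb (fun z => f (e z))
    (Set.Icc (a j) (b j) ×ˢ Set.Icc (a ∘ j.succAbove) (b ∘ j.succAbove))
  rw [← hsi, Set.preimage_swap_prod]
  have hint : IntegrableOn (fun z : (Fin 2 → ℝ) × ℝ => f (e z.swap))
      ((Set.Icc (a ∘ j.succAbove) (b ∘ j.succAbove)) ×ˢ Set.Icc (a j) (b j))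
      ((volume : Measure (Fin 2 → ℝ)).prod (volume : Measure ℝ)) := by
    rw [← Measure.volume_eq_prod]
    exact ((hf.comp hecont).comp continuous_swap).continuousOn.integrableOn_compact
      (isCompact_Icc.prod isCompact_Icc)
  rw [setIntegral_prod _ hint]
  have hz : ∀ y ∈ Set.Icc (a ∘ j.succAbove) (b ∘ j.succAbove),
      (∫ t in Set.Icc (a j) (b j), f (e ((y, t) : (Fin 2 → ℝ) × ℝ).swap)) = 0 := by
    intro y _
    have h2 : ∀ t : ℝ, f (e ((y, t) : (Fin 2 → ℝ) × ℝ).swap) = f (j.insertNth t y) := by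
      intro t; simp [he, Fin.insertNthEquiv]
    simp only [h2]
    exact h0 y
  rw [setIntegral_congr_fun measurableSet_Icc hz]
  simp

/-- cancellation of the baroclinic transport terms in the
`⟨ṽ, θ⟩`-estimate. -/
theorem statement11
    (h : ℝ) (hh : 0 < h)
    (vt : Fin 2 → (Fin 3 → ℝ) → ℝ)
    (hvt_smooth : ∀ i, ContDiff ℝ (⊤ : ℕ∞) (vt i))
    (hvt_per : ∀ i, HorizPeriodic (vt i))
    (θ : (Fin 3 → ℝ) → ℝ)
    (hθ_smooth : ContDiff ℝ (⊤ : ℕ∞) θ) (hθ_per : HorizPeriodic θ)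
    (hdiv : ∀ x : Fin 3 → ℝ, (∫ ζ in (-h)..(0:ℝ), divH vt (Function.update x 2 ζ)) = 0) :
    (∫ x in Box h,
        ((∑ i, vt i x ^ 2) * θ x * adv3 vt (wv h vt) θ x
          + θ x ^ 2 * (∑ i, vt i x * adv3 vt (wv h vt) (vt i) x))) = 0 := by
  classical
  have hvd : ∀ i, Differentiable ℝ (vt i) := fun i => (hvt_smooth i).differentiable (by simp)
  have hθd : Differentiable ℝ θ := hθ_smooth.differentiable (by simp)
  set F : (Fin 3 → ℝ) → ℝ := fun y => (vt 0 y ^ 2 + vt 1 y ^ 2) * θ y ^ 2 with hFdef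
  have hFsm : ContDiff ℝ (⊤ : ℕ∞) F :=
    (((hvt_smooth 0).pow 2).add ((hvt_smooth 1).pow 2)).mul (hθ_smooth.pow 2)
  have hFd : Differentiable ℝ F := hFsm.differentiable (by simp)
  set G0 : (Fin 3 → ℝ) → ℝ := fun y => vt 0 y * F y with hG0def
  set G1 : (Fin 3 → ℝ) → ℝ := fun y => vt 1 y * F y with hG1def
  have hG0sm : ContDiff ℝ (⊤ : ℕ∞) G0 := (hvt_smooth 0).mul hFsm
  have hG1sm : ContDiff ℝ (⊤ : ℕ∞) G1 := (hvt_smooth 1).mul hFsm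
  have hG0d : Differentiable ℝ G0 := hG0sm.differentiable (by simp)
  have hG1d : Differentiable ℝ G1 := hG1sm.differentiable (by simp)
  have hdivHc : Continuous (divH vt) := (pd_cont (hvt_smooth 0) 0).add (pd_cont (hvt_smooth 1) 1)
  have hwc : Continuous (wv h vt) := by
    have h1 : Continuous fun x : Fin 3 → ℝ =>
        ∫ ζ in (-h)..(x 2), divH vt (Function.update x 2 ζ) := by
      apply intervalIntegral.continuous_parametric_intervalIntegral_of_continuous
        (f := fun (x : Fin 3 → ℝ) (ζ : ℝ) => divH vt (Function.update x 2 ζ))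
        (hdivHc.comp (continuous_updatePair 2)) (continuous_apply 2)
    exact h1.neg
  -- periodicity
  have hFper : HorizPeriodic F := by
    intro x
    refine ⟨?_, ?_⟩ <;>
      simp only [hFdef, (hvt_per 0 x).1, (hvt_per 1 x).1, (hθ_per x).1,
        (hvt_per 0 x).2, (hvt_per 1 x).2, (hθ_per x).2]
  have hG0per : HorizPeriodic G0 := by
    intro x
    refine ⟨?_, ?_⟩ <;>
      simp only [hG0def, (hvt_per 0 x).1, (hvt_per 0 x).2, (hFper x).1, (hFper x).2]
  have hG1per : HorizPeriodic G1 := by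
    intro x
    refine ⟨?_, ?_⟩ <;>
      simp only [hG1def, (hvt_per 1 x).1, (hvt_per 1 x).2, (hFper x).1, (hFper x).2]
  -- derivative of F
  have hpdF : ∀ (j : Fin 3) (x : Fin 3 → ℝ), pd j F x
      = (2 * vt 0 x * pd j (vt 0) x + 2 * vt 1 x * pd j (vt 1) x) * θ x ^ 2
        + (vt 0 x ^ 2 + vt 1 x ^ 2) * (2 * θ x * pd j θ x) := by
    intro j x
    have h1 : pd j (fun y => vt 0 y ^ 2 + vt 1 y ^ 2) x
        = 2 * vt 0 x * pd j (vt 0) x + 2 * vt 1 x * pd j (vt 1) x := by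
      rw [pd_add (f := fun y => vt 0 y ^ 2) (g := fun y => vt 1 y ^ 2) j ((hvd 0 x).pow 2) ((hvd 1 x).pow 2), pd_sq j (hvd 0 x), pd_sq j (hvd 1 x)]
    have h2 : pd j (fun y => θ y ^ 2) x = 2 * θ x * pd j θ x := pd_sq j (hθd x)
    calc pd j F x
        = (vt 0 x ^ 2 + vt 1 x ^ 2) * pd j (fun y => θ y ^ 2) x
            + pd j (fun y => vt 0 y ^ 2 + vt 1 y ^ 2) x * θ x ^ 2 :=
          pd_mul j (((hvd 0 x).pow 2).add ((hvd 1 x).pow 2)) ((hθd x).pow 2)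
      _ = _ := by rw [h1, h2]; ring
  -- pointwise identity
  have hkey : ∀ x : Fin 3 → ℝ,
      (∑ i, vt i x ^ 2) * θ x * adv3 vt (wv h vt) θ x
        + θ x ^ 2 * (∑ i, vt i x * adv3 vt (wv h vt) (vt i) x)
      = (pd 0 G0 x + pd 1 G1 x + (wv h vt x * pd 2 F x - divH vt x * F x)) / 2 := by
    intro x
    have e0 : pd 0 G0 x = vt 0 x * pd 0 F x + pd 0 (vt 0) x * F x := by
      rw [hG0def]; exact pd_mul 0 (hvd 0 x) (hFd x)
    have e1 : pd 1 G1 x = vt 1 x * pd 1 F x + pd 1 (vt 1) x * F x := by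
      rw [hG1def]; exact pd_mul 1 (hvd 1 x) (hFd x)
    rw [e0, e1, hpdF 0 x, hpdF 1 x, hpdF 2 x]
    simp only [hFdef, adv3, divH, Fin.sum_univ_two]
    ring
  have hbox : Box h = Set.Icc (![0, 0, -h]) (![1, 1, 0]) := rfl
  have hcpt : IsCompact (Box h) := hbox ▸ isCompact_Icc
  have hmeasBox : MeasurableSet (Box h) := hbox ▸ measurableSet_Icc
  rw [setIntegral_congr_fun hmeasBox (fun x _ => hkey x)]
  have i0 : IntegrableOn (fun x => pd 0 G0 x) (Box h) :=
    (pd_cont hG0sm 0).continuousOn.integrableOn_compact hcpt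
  have i1 : IntegrableOn (fun x => pd 1 G1 x) (Box h) :=
    (pd_cont hG1sm 1).continuousOn.integrableOn_compact hcpt
  have i2 : IntegrableOn (fun x => wv h vt x * pd 2 F x - divH vt x * F x) (Box h) :=
    ((hwc.mul (pd_cont hFsm 2)).sub (hdivHc.mul hFsm.continuous)).continuousOn.integrableOn_compact
      hcpt
  have i01 : IntegrableOn (fun x => pd 0 G0 x + pd 1 G1 x) (Box h) volume := i0.add i1
  rw [integral_div, integral_add i01 i2, integral_add i0 i1]
  -- the three slice integrals vanish
  have hA : (∫ x in Box h, pd 0 G0 x) = 0 := by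
    rw [hbox]
    refine slice_integral_zero _ (pd_cont hG0sm 0) 0 fun y => ?_
    show (∫ t in Set.Icc (0:ℝ) 1, pd 0 G0 (Fin.insertNth 0 t y)) = 0
    rw [MeasureTheory.integral_Icc_eq_integral_Ioc,
      ← intervalIntegral.integral_of_le (by norm_num : (0:ℝ) ≤ 1)]
    have hderiv : ∀ t ∈ Set.uIcc (0:ℝ) 1,
        HasDerivAt (fun s => G0 (Fin.insertNth (α := fun _ => ℝ) 0 s y))
          (pd 0 G0 (Fin.insertNth 0 t y)) t := by
      intro t _
      have h1 := pd_hasDerivAt_update hG0d (Fin.insertNth (α := fun _ => ℝ) 0 t y) 0 t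
      simpa only [update_insertNth] using h1
    rw [intervalIntegral.integral_eq_sub_of_hasDerivAt hderiv
      (((pd_cont hG0sm 0).comp (continuous_insertNth 0 y)).intervalIntegrable _ _)]
    have h3 : Fin.insertNth (α := fun _ => ℝ) 0 1 y
        = Fin.insertNth (α := fun _ => ℝ) 0 0 y + Pi.single 0 1 := by
      rw [insertNth_add_single]; norm_num
    rw [h3, (hG0per _).1, sub_self]
  have hB : (∫ x in Box h, pd 1 G1 x) = 0 := by
    rw [hbox]
    refine slice_integral_zero _ (pd_cont hG1sm 1) 1 fun y => ?_
    show (∫ t in Set.Icc (0:ℝ) 1, pd 1 G1 (Fin.insertNth 1 t y)) = 0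
    rw [MeasureTheory.integral_Icc_eq_integral_Ioc,
      ← intervalIntegral.integral_of_le (by norm_num : (0:ℝ) ≤ 1)]
    have hderiv : ∀ t ∈ Set.uIcc (0:ℝ) 1,
        HasDerivAt (fun s => G1 (Fin.insertNth (α := fun _ => ℝ) 1 s y))
          (pd 1 G1 (Fin.insertNth 1 t y)) t := by
      intro t _
      have h1 := pd_hasDerivAt_update hG1d (Fin.insertNth (α := fun _ => ℝ) 1 t y) 1 t
      simpa only [update_insertNth] using h1
    rw [intervalIntegral.integral_eq_sub_of_hasDerivAt hderiv
      (((pd_cont hG1sm 1).comp (continuous_insertNth 1 y)).intervalIntegrable _ _)]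
    have h3 : Fin.insertNth (α := fun _ => ℝ) 1 1 y
        = Fin.insertNth (α := fun _ => ℝ) 1 0 y + Pi.single 1 1 := by
      rw [insertNth_add_single]; norm_num
    rw [h3, (hG1per _).2, sub_self]
  have hC : (∫ x in Box h, (wv h vt x * pd 2 F x - divH vt x * F x)) = 0 := by
    rw [hbox]
    refine slice_integral_zero _
      ((hwc.mul (pd_cont hFsm 2)).sub (hdivHc.mul hFsm.continuous)) 2 fun y => ?_
    show (∫ t in Set.Icc (-h) (0:ℝ),
        (wv h vt (Fin.insertNth 2 t y) * pd 2 F (Fin.insertNth 2 t y)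
          - divH vt (Fin.insertNth 2 t y) * F (Fin.insertNth 2 t y))) = 0
    set X : Fin 3 → ℝ := Fin.insertNth (α := fun _ => ℝ) 2 0 y with hX
    have hins : ∀ t : ℝ, Fin.insertNth (α := fun _ => ℝ) 2 t y = Function.update X 2 t :=
      fun t => (update_insertNth 2 0 t y).symm
    simp only [hins]
    rw [MeasureTheory.integral_Icc_eq_integral_Ioc,
      ← intervalIntegral.integral_of_le (by linarith : (-h) ≤ 0)]
    have hupdc : Continuous fun ζ : ℝ => divH vt (Function.update X 2 ζ) :=
      hdivHc.comp (continuous_updateVal X 2)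
    have hwd : ∀ t : ℝ, HasDerivAt (fun s => wv h vt (Function.update X 2 s))
        (-(divH vt (Function.update X 2 t))) t := by
      intro t
      have heq : (fun s => wv h vt (Function.update X 2 s))
          = fun s => -(∫ ζ in (-h)..s, divH vt (Function.update X 2 ζ)) := by
        funext s
        simp only [wv]
        congr 1
        simp [Function.update_idem]
      rw [heq]
      exact (intervalIntegral.integral_hasDerivAt_right (hupdc.intervalIntegrable _ _)
        (hupdc.stronglyMeasurableAtFilter _ _) hupdc.continuousAt).neg
    have hderiv : ∀ t ∈ Set.uIcc (-h) (0:ℝ),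
        HasDerivAt (fun s => wv h vt (Function.update X 2 s) * F (Function.update X 2 s))
          (wv h vt (Function.update X 2 t) * pd 2 F (Function.update X 2 t)
            - divH vt (Function.update X 2 t) * F (Function.update X 2 t)) t := by
      intro t _
      have hm : HasDerivAt (fun s => wv h vt (Function.update X 2 s) * F (Function.update X 2 s))
          (-(divH vt (Function.update X 2 t)) * F (Function.update X 2 t)
            + wv h vt (Function.update X 2 t) * pd 2 F (Function.update X 2 t)) t :=
        (hwd t).fun_mul (pd_hasDerivAt_update hFd X 2 t)
      convert hm using 1
      ring
    have hii : IntervalIntegrable (fun t : ℝ =>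
        wv h vt (Function.update X 2 t) * pd 2 F (Function.update X 2 t)
          - divH vt (Function.update X 2 t) * F (Function.update X 2 t)) volume (-h) 0 :=
      ((((hwc.mul (pd_cont hFsm 2)).sub (hdivHc.mul hFsm.continuous)).comp
        (continuous_updateVal X 2)).intervalIntegrable _ _ : _)
    rw [intervalIntegral.integral_eq_sub_of_hasDerivAt hderiv hii]
    have hw0 : wv h vt (Function.update X 2 0) = 0 := by
      have : (∫ ζ in (-h)..((Function.update X 2 (0:ℝ)) 2),
          divH vt (Function.update (Function.update X 2 0) 2 ζ))
          = ∫ ζ in (-h)..(0:ℝ), divH vt (Function.update X 2 ζ) := by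
        simp [Function.update_idem]
      simp only [wv, this, hdiv X, neg_zero]
    have hwh : wv h vt (Function.update X 2 (-h)) = 0 := by
      simp [wv, Function.update_idem]
    rw [hw0, hwh]
    ring
  rw [hA, hB, hC]
  norm_num
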